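/- Fix Δt, ε > 0, a planar vector E_⊥, a scalar b > 0, and consider the backward Euler step v^{n+1} = v^n + Δt(E_⊥ - b (v^{n+1})^⊥/ε) for planar vectors. If the sequence (v^n) is bounded by M, then ‖v^{n+1}‖ ≤ ε·(2M/(b·Δt) + ‖E_⊥‖/b). In particular, for fixed Δt, v^{n+1} = O(ε) as ε → 0. -/

import Mathlib

/-- The 90-degree rotation in the x-y plane: `w^⊥ = (-w₂, w₁, 0)`. -/
noncomputable def perp (v : EuclideanSpace ℝ (Fin 3)) : EuclideanSpace ℝ (Fin 3) :=
  WithLp.toLp 2 (fun i : Fin 3 => if i = 0 then -(v 1) else if i = 1 then v 0 else 0)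

lemma norm_perp (v : EuclideanSpace ℝ (Fin 3)) (h : v 2 = 0) : ‖perp v‖ = ‖v‖ := by
  rw [EuclideanSpace.norm_eq, EuclideanSpace.norm_eq]
  congr 1
  rw [Fin.sum_univ_three, Fin.sum_univ_three]
  simp [perp, h]
  ring

theorem backward_euler_velocity_order_eps (Δt ε b M : ℝ)
    (hΔt : 0 < Δt) (hε : 0 < ε) (hb : 0 < b) (hM : 0 ≤ M)
    (E : EuclideanSpace ℝ (Fin 3)) (hE : E 2 = 0)
    (v : ℕ → EuclideanSpace ℝ (Fin 3)) (hplanar : ∀ n, v n 2 = 0)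
    (hrec : ∀ n, v (n + 1) = v n + Δt • (E - (b / ε) • perp (v (n + 1))))
    (hbound : ∀ n, ‖v n‖ ≤ M) :
    ∀ n, ‖v (n + 1)‖ ≤ ε * (2 * M / (b * Δt) + ‖E‖ / b) := by
  intro n
  have key : (b / ε) • perp (v (n + 1)) = E - (Δt⁻¹) • (v (n + 1) - v n) := by
    have h := hrec n
    have : v (n + 1) - v n = Δt • (E - (b / ε) • perp (v (n + 1))) := by
      conv_lhs => rw [h]
      abel
    rw [this, smul_smul, inv_mul_cancel₀ hΔt.ne', one_smul]
    abel
  have hn : (b / ε) * ‖v (n + 1)‖ ≤ ‖E‖ + Δt⁻¹ * (2 * M) := by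
    have h1 : ‖(b / ε) • perp (v (n + 1))‖ = (b / ε) * ‖v (n + 1)‖ := by
      rw [norm_smul, norm_perp _ (hplanar (n + 1)), Real.norm_eq_abs,
        abs_of_pos (div_pos hb hε)]
    calc (b / ε) * ‖v (n + 1)‖ = ‖E - (Δt⁻¹) • (v (n + 1) - v n)‖ := by rw [← h1, key]
      _ ≤ ‖E‖ + ‖(Δt⁻¹) • (v (n + 1) - v n)‖ := norm_sub_le _ _
      _ ≤ ‖E‖ + Δt⁻¹ * (2 * M) := by
          gcongr
          rw [norm_smul, Real.norm_eq_abs, abs_of_pos (inv_pos.mpr hΔt)]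
          gcongr
          calc ‖v (n + 1) - v n‖ ≤ ‖v (n + 1)‖ + ‖v n‖ := norm_sub_le _ _
            _ ≤ M + M := add_le_add (hbound _) (hbound _)
            _ = 2 * M := by ring
  have : ‖v (n + 1)‖ ≤ (ε / b) * (‖E‖ + Δt⁻¹ * (2 * M)) := by
    rw [div_mul_eq_mul_div, le_div_iff₀ hb, mul_comm]
    calc b * ‖v (n + 1)‖ = ε * ((b / ε) * ‖v (n + 1)‖) := by
          field_simp
      _ ≤ ε * (‖E‖ + Δt⁻¹ * (2 * M)) := by gcongr
  calc ‖v (n + 1)‖ ≤ (ε / b) * (‖E‖ + Δt⁻¹ * (2 * M)) := this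
    _ = ε * (2 * M / (b * Δt) + ‖E‖ / b) := by field_simp; ring
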